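/- Let Π be an orthogonal projection on a Hilbert space with Σ = 2Π-1, and U a unitary with [Σ,U] Hilbert–Schmidt. Then ΠUΠ, viewed as an operator on the range of Π, is a Fredholm operator. -/

import Mathlib

open ContinuousLinearMap
open Function

/-- A bounded operator is Hilbert–Schmidt if the sum of `‖T e i‖²` over some
Hilbert basis is finite. -/
def IsHilbertSchmidt {H : Type} [NormedAddCommGroup H] [InnerProductSpace ℂ H]
    [CompleteSpace H] (T : H →L[ℂ] H) : Prop :=
  ∃ (ι : Type) (e : HilbertBasis ι ℂ H), Summable fun i => ‖T (e i)‖ ^ 2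

private lemma tsum_cs {ι : Type} (f g : ι → ℝ) (hf : ∀ i, 0 ≤ f i) (hg : ∀ i, 0 ≤ g i)
    (hf2 : Summable fun i => f i ^ 2) (hg2 : Summable fun i => g i ^ 2) :
    Summable (fun i => f i * g i) ∧
      ∑' i, f i * g i ≤ Real.sqrt (∑' i, f i ^ 2) * Real.sqrt (∑' i, g i ^ 2) := by
  have hsum : Summable (fun i => f i * g i) :=
    Summable.of_nonneg_of_le (fun i => mul_nonneg (hf i) (hg i))
      (fun i => by nlinarith [sq_nonneg (f i - g i)]) (hf2.add hg2)
  refine ⟨hsum, Summable.tsum_le_of_sum_le hsum fun s => ?_⟩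
  have h1 := Finset.sum_mul_sq_le_sq_mul_sq s f g
  have h2 : ∑ i ∈ s, f i ^ 2 ≤ ∑' i, f i ^ 2 := Summable.sum_le_tsum s (fun i _ => sq_nonneg _) hf2
  have h3 : ∑ i ∈ s, g i ^ 2 ≤ ∑' i, g i ^ 2 := Summable.sum_le_tsum s (fun i _ => sq_nonneg _) hg2
  have h5 : (0:ℝ) ≤ ∑' i, f i ^ 2 := tsum_nonneg fun i => sq_nonneg _
  have h6 : (0:ℝ) ≤ ∑' i, g i ^ 2 := tsum_nonneg fun i => sq_nonneg _
  calc ∑ i ∈ s, f i * g i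
      = Real.sqrt ((∑ i ∈ s, f i * g i) ^ 2) :=
        (Real.sqrt_sq (Finset.sum_nonneg fun i _ => mul_nonneg (hf i) (hg i))).symm
    _ ≤ Real.sqrt ((∑' i, f i ^ 2) * (∑' i, g i ^ 2)) := by
        apply Real.sqrt_le_sqrt
        exact h1.trans (mul_le_mul h2 h3 (Finset.sum_nonneg fun i _ => sq_nonneg _) h5)
    _ = Real.sqrt (∑' i, f i ^ 2) * Real.sqrt (∑' i, g i ^ 2) := Real.sqrt_mul h5 _

section HS
variable {H : Type} [NormedAddCommGroup H] [InnerProductSpace ℂ H] [CompleteSpace H]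

local notation "⟪" x ", " y "⟫" => @inner ℂ _ _ x y

lemma hs_approx (C : H →L[ℂ] H) (hC : IsHilbertSchmidt C) :
    ∀ ε > (0:ℝ), ∃ F : H →L[ℂ] H,
      FiniteDimensional ℂ (LinearMap.range (F : H →ₗ[ℂ] H)) ∧ ‖C - F‖ ≤ ε := by
  intro ε hε
  obtain ⟨ι, e, hsum⟩ := hC
  classical
  have htail : ∀ᶠ s : Finset ι in Filter.atTop,
      ∑' i : {x // x ∉ s}, ‖C (e i)‖ ^ 2 < ε ^ 2 :=
    (tendsto_order.1 (tendsto_tsum_compl_atTop_zero fun i => ‖C (e i)‖ ^ 2)).2 _ (by positivity)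
  obtain ⟨s, hs⟩ := htail.exists
  set F : H →L[ℂ] H := ∑ i ∈ s, (innerSL ℂ (e i)).smulRight (C (e i)) with hF
  have hFapply : ∀ x, F x = ∑ i ∈ s, e.repr x i • C (e i) := by
    intro x
    rw [hF]
    simp [ContinuousLinearMap.sum_apply, HilbertBasis.repr_apply_apply]
  refine ⟨F, ?_, ?_⟩
  · have hle : LinearMap.range (F : H →ₗ[ℂ] H) ≤
        Submodule.span ℂ ((s.image (fun i => C (e i)) : Finset H) : Set H) := by
      rintro y ⟨x, rfl⟩
      rw [ContinuousLinearMap.coe_coe, hFapply]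
      exact Submodule.sum_mem _ fun i hi => Submodule.smul_mem _ _
        (Submodule.subset_span (Finset.mem_coe.2 (Finset.mem_image_of_mem _ hi)))
    exact Submodule.finiteDimensional_of_le hle
  · apply ContinuousLinearMap.opNorm_le_bound _ hε.le
    intro x
    have hCx : HasSum (fun i => e.repr x i • C (e i)) (C x) := by
      have := (e.hasSum_repr x).mapL C
      simpa using this
    have hdiff : (C - F) x = ∑' i : {j // j ∉ s}, e.repr x i • C (e (i : ι)) := by
      have := Summable.sum_add_tsum_subtype_compl hCx.summable s
      rw [hCx.tsum_eq] at this
      rw [ContinuousLinearMap.sub_apply, hFapply, eq_sub_of_add_eq' this]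
    set f : {j // j ∉ s} → ℝ := fun i => ‖e.repr x (i : ι)‖ with hfdef
    set g : {j // j ∉ s} → ℝ := fun i => ‖C (e (i : ι))‖ with hgdef
    have hbes : Summable (fun i : ι => ‖e.repr x i‖ ^ 2) := by
      simpa [HilbertBasis.repr_apply_apply] using e.orthonormal.inner_products_summable (x := x)
    have hf2 : Summable fun i => f i ^ 2 := hbes.subtype _
    have hg2 : Summable fun i => g i ^ 2 := hsum.subtype _
    have hfg := tsum_cs f g (fun i => norm_nonneg _) (fun i => norm_nonneg _) hf2 hg2
    have hnsum : Summable fun i : {j // j ∉ s} => ‖e.repr x (i : ι) • C (e (i : ι))‖ := by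
      simpa [norm_smul] using hfg.1
    have hnorm : ‖(C - F) x‖ ≤ ∑' i : {j // j ∉ s}, f i * g i := by
      rw [hdiff]
      refine (norm_tsum_le_tsum_norm hnsum).trans (le_of_eq (tsum_congr fun i => ?_))
      rw [norm_smul]
    have hb1 : Real.sqrt (∑' i, f i ^ 2) ≤ ‖x‖ := by
      have htle : ∑' i : {j // j ∉ s}, f i ^ 2 ≤ ∑' i : ι, ‖e.repr x i‖ ^ 2 :=
        Summable.tsum_le_tsum_of_inj (Subtype.val) Subtype.val_injective (fun c _ => sq_nonneg _)
          (fun b => le_rfl) hf2 hbes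
      have hbessel : ∑' i : ι, ‖e.repr x i‖ ^ 2 ≤ ‖x‖ ^ 2 := by
        simpa [HilbertBasis.repr_apply_apply] using
          e.orthonormal.tsum_inner_products_le (x := x)
      calc Real.sqrt (∑' i, f i ^ 2) ≤ Real.sqrt (‖x‖ ^ 2) :=
            Real.sqrt_le_sqrt (htle.trans hbessel)
        _ = ‖x‖ := Real.sqrt_sq (norm_nonneg x)
    have hb2 : Real.sqrt (∑' i, g i ^ 2) ≤ ε := by
      calc Real.sqrt (∑' i, g i ^ 2) ≤ Real.sqrt (ε ^ 2) := Real.sqrt_le_sqrt hs.le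
        _ = ε := Real.sqrt_sq hε.le
    calc ‖(C - F) x‖ ≤ ∑' i : {j // j ∉ s}, f i * g i := hnorm
      _ ≤ Real.sqrt (∑' i, f i ^ 2) * Real.sqrt (∑' i, g i ^ 2) := hfg.2
      _ ≤ ‖x‖ * ε := by
          apply mul_le_mul hb1 hb2 (Real.sqrt_nonneg _) (norm_nonneg x)
      _ = ε * ‖x‖ := mul_comm _ _
end HS

section Abstract
variable {E : Type} [NormedAddCommGroup E] [NormedSpace ℂ E]

lemma ker_fd (T S K F : E →L[ℂ] E) (hST : S * T = 1 - K)
    (hF : FiniteDimensional ℂ (LinearMap.range (F : E →ₗ[ℂ] E))) (hKF : ‖K - F‖ < 1) :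
    FiniteDimensional ℂ (LinearMap.ker (T : E →ₗ[ℂ] E)) := by
  haveI := hF
  have key : ∀ z, T z = 0 → F z = 0 → z = 0 := by
    intro z hT hF0
    have h1 : S (T z) = z - K z := by
      rw [← ContinuousLinearMap.mul_apply, hST]
      simp
    rw [hT, map_zero] at h1
    have h2 : z = (K - F) z := by
      rw [ContinuousLinearMap.sub_apply, hF0, sub_zero]
      exact (sub_eq_zero.mp h1.symm) ▸ rfl
    by_contra hz
    have hzpos : 0 < ‖z‖ := norm_pos_iff.2 hz
    have : ‖z‖ ≤ ‖K - F‖ * ‖z‖ := by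
      conv_lhs => rw [h2]
      exact (K - F).le_opNorm z
    nlinarith
  let φ : LinearMap.ker (T : E →ₗ[ℂ] E) →ₗ[ℂ] LinearMap.range (F : E →ₗ[ℂ] E) :=
    LinearMap.codRestrict _ ((F : E →ₗ[ℂ] E).comp (LinearMap.ker (T : E →ₗ[ℂ] E)).subtype)
      (fun x => LinearMap.mem_range_self _ _)
  apply FiniteDimensional.of_injective φ
  intro a b hab
  have h : F ((a : E) - (b : E)) = 0 := by
    have : F (a : E) = F (b : E) := congrArg Subtype.val hab
    rw [map_sub, this, sub_self]
  have hT : T ((a : E) - (b : E)) = 0 := by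
    rw [map_sub]
    rw [show T (a : E) = 0 from LinearMap.mem_ker.1 a.2, show T (b : E) = 0 from LinearMap.mem_ker.1 b.2, sub_self]
  have := key _ hT h
  exact Subtype.ext (by rwa [sub_eq_zero] at this)

lemma range_lemma [CompleteSpace E] (T S K F : E →L[ℂ] E) (hTS : T * S = 1 - K)
    (hF : FiniteDimensional ℂ (LinearMap.range (F : E →ₗ[ℂ] E))) (hKF : ‖K - F‖ < 1) :
    IsClosed ((LinearMap.range (T : E →ₗ[ℂ] E) : Submodule ℂ E) : Set E) ∧
      FiniteDimensional ℂ (E ⧸ LinearMap.range (T : E →ₗ[ℂ] E)) := by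
  haveI := hF
  set G : (E →L[ℂ] E)ˣ := Units.oneSub (K - F) hKF with hGdef
  have hGval : (G : E →L[ℂ] E) = 1 - (K - F) := rfl
  set M : Submodule ℂ E :=
    (LinearMap.ker (F : E →ₗ[ℂ] E)).map ((G : E →L[ℂ] E) : E →ₗ[ℂ] E) with hM
  have hMrange : M ≤ LinearMap.range (T : E →ₗ[ℂ] E) := by
    rintro y ⟨x, hx, rfl⟩
    refine ⟨S x, ?_⟩
    have hFx : F x = 0 := hx
    have h1 : T (S x) = x - K x := by
      rw [← ContinuousLinearMap.mul_apply, hTS]; simp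
    show T (S x) = (G : E →L[ℂ] E) x
    rw [h1, hGval]
    simp [hFx]
  have hGinv : ∀ y, (G : E →L[ℂ] E) ((↑G⁻¹ : E →L[ℂ] E) y) = y := by
    intro y
    rw [← ContinuousLinearMap.mul_apply, G.mul_inv]
    simp
  have hGinv' : ∀ y, (↑G⁻¹ : E →L[ℂ] E) ((G : E →L[ℂ] E) y) = y := by
    intro y
    rw [← ContinuousLinearMap.mul_apply, G.inv_mul]
    simp
  have hkerclosed : IsClosed ((LinearMap.ker (F : E →ₗ[ℂ] E) : Submodule ℂ E) : Set E) := by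
    have : ((LinearMap.ker (F : E →ₗ[ℂ] E) : Submodule ℂ E) : Set E) = F ⁻¹' {0} := by
      ext z; simp [LinearMap.mem_ker]
    rw [this]
    exact isClosed_singleton.preimage F.continuous
  have hMclosed : IsClosed (M : Set E) := by
    have hset : (M : Set E) =
        (↑G⁻¹ : E →L[ℂ] E) ⁻¹' ((LinearMap.ker (F : E →ₗ[ℂ] E) : Submodule ℂ E) : Set E) := by
      ext y
      constructor
      · rintro ⟨x, hx, rfl⟩
        simpa [hGinv'] using hx
      · intro hy
        exact ⟨(↑G⁻¹ : E →L[ℂ] E) y, hy, hGinv y⟩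
    rw [hset]
    exact hkerclosed.preimage (↑G⁻¹ : E →L[ℂ] E).continuous
  have hGsurj : Surjective (G : E →L[ℂ] E) := fun y => ⟨(↑G⁻¹ : E →L[ℂ] E) y, hGinv y⟩
  -- E ⧸ M is finite dimensional
  haveI hqk : FiniteDimensional ℂ (E ⧸ LinearMap.ker (F : E →ₗ[ℂ] E)) :=
    Module.Finite.equiv (F : E →ₗ[ℂ] E).quotKerEquivRange.symm
  let φ : E →ₗ[ℂ] E ⧸ M := M.mkQ.comp (((G : E →L[ℂ] E)) : E →ₗ[ℂ] E)
  have hφsurj : Surjective φ := (Submodule.mkQ_surjective M).comp hGsurj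
  have hkerφ : LinearMap.ker (F : E →ₗ[ℂ] E) ≤ LinearMap.ker φ := by
    intro x hx
    have : (G : E →L[ℂ] E) x ∈ M := ⟨x, hx, rfl⟩
    simpa [φ, Submodule.Quotient.mk_eq_zero] using this
  let σ : (E ⧸ LinearMap.ker (F : E →ₗ[ℂ] E)) →ₗ[ℂ] E ⧸ M :=
    Submodule.liftQ _ φ hkerφ
  have hσsurj : Surjective σ := by
    intro y
    obtain ⟨x, hx⟩ := hφsurj y
    exact ⟨Submodule.Quotient.mk x, hx⟩
  haveI hQM : FiniteDimensional ℂ (E ⧸ M) := Module.Finite.of_surjective σ hσsurj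
  -- transfer to V = range T
  set V := LinearMap.range (T : E →ₗ[ℂ] E) with hV
  haveI : IsClosed (M : Set E) := hMclosed
  let W : Submodule ℂ (E ⧸ M) := V.map M.mkQ
  have hWclosed : IsClosed (W : Set (E ⧸ M)) := Submodule.closed_of_finiteDimensional W
  have hmkcont : Continuous (M.mkQ) := continuous_quot_mk
  have hVeq : (V : Set E) = M.mkQ ⁻¹' W := by
    ext x
    constructor
    · intro hx
      exact ⟨x, hx, rfl⟩
    · rintro ⟨v, hv, hxv⟩
      have hsub : v - x ∈ M := by
        rw [Submodule.mkQ_apply, Submodule.mkQ_apply, Submodule.Quotient.eq] at hxv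
        exact hxv
      have : x = v - (v - x) := by abel
      rw [this]
      exact V.sub_mem hv (hMrange hsub)
  constructor
  · rw [hVeq]
    exact hWclosed.preimage hmkcont
  · let σ₂ : (E ⧸ M) →ₗ[ℂ] E ⧸ V := Submodule.mapQ M V LinearMap.id hMrange
    have hσ₂ : Surjective σ₂ := by
      intro y
      obtain ⟨x, rfl⟩ := Submodule.Quotient.mk_surjective V y
      exact ⟨Submodule.Quotient.mk x, rfl⟩
    exact Module.Finite.of_surjective σ₂ hσ₂

end Abstract

section Transfer
variable {H : Type} [NormedAddCommGroup H] [InnerProductSpace ℂ H] [CompleteSpace H]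

lemma transfer (P : H →L[ℂ] H) (hP : P * P = P) (A B C : H →L[ℂ] H)
    (hCapp : ∀ ε > (0:ℝ), ∃ F : H →L[ℂ] H,
      FiniteDimensional ℂ (LinearMap.range (F : H →ₗ[ℂ] H)) ∧ ‖C - F‖ ≤ ε) :
    ∀ ε > (0:ℝ), ∃ F : H →L[ℂ] H,
      FiniteDimensional ℂ (LinearMap.range (F : H →ₗ[ℂ] H)) ∧ (P * F * P = F) ∧
      ‖P * A * C * (B * P) - F‖ ≤ ε := by
  intro ε hε
  set c : ℝ := ‖P * A‖ * ‖B * P‖ + 1 with hc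
  have hcpos : 0 < c := by positivity
  obtain ⟨F0, hF0fd, hF0c⟩ := hCapp (ε / c) (by positivity)
  refine ⟨P * A * F0 * (B * P), ?_, ?_, ?_⟩
  · haveI := hF0fd
    have hle : LinearMap.range ((P * A * F0 * (B * P) : H →L[ℂ] H) : H →ₗ[ℂ] H) ≤
        (LinearMap.range (F0 : H →ₗ[ℂ] H)).map ((P * A : H →L[ℂ] H) : H →ₗ[ℂ] H) := by
      rintro y ⟨x, rfl⟩
      refine ⟨F0 ((B * P) x), ⟨(B * P) x, rfl⟩, ?_⟩
      simp [ContinuousLinearMap.mul_apply]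
    exact Submodule.finiteDimensional_of_le hle
  · calc P * (P * A * F0 * (B * P)) * P = (P * P) * A * F0 * (B * (P * P)) := by noncomm_ring
      _ = P * A * F0 * (B * P) := by rw [hP]
  · have heq : P * A * C * (B * P) - P * A * F0 * (B * P) = (P * A) * (C - F0) * (B * P) := by
      noncomm_ring
    rw [heq]
    have h1 : ‖(P * A) * (C - F0) * (B * P)‖ ≤ ‖P * A‖ * ‖C - F0‖ * ‖B * P‖ :=
      (norm_mul_le _ _).trans (mul_le_mul_of_nonneg_right (norm_mul_le _ _) (norm_nonneg _))
    have h2 : ‖P * A‖ * ‖C - F0‖ * ‖B * P‖ ≤ ‖P * A‖ * (ε / c) * ‖B * P‖ := by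
      have := hF0c
      gcongr
    refine h1.trans (h2.trans ?_)
    have h3 : ‖P * A‖ * (ε / c) * ‖B * P‖ = (‖P * A‖ * ‖B * P‖) * (ε / c) := by ring
    rw [h3]
    have h4 : (‖P * A‖ * ‖B * P‖) * (ε / c) ≤ c * (ε / c) :=
      mul_le_mul_of_nonneg_right (by simp [hc]) (by positivity)
    refine h4.trans (le_of_eq ?_)
    field_simp

lemma compress (P : H →L[ℂ] H) (hP : P * P = P) (D : H →L[ℂ] H)
    (Ke : (LinearMap.range (P : H →ₗ[ℂ] H)) →L[ℂ] (LinearMap.range (P : H →ₗ[ℂ] H)))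
    (hKe : ∀ x : LinearMap.range (P : H →ₗ[ℂ] H), (Ke x : H) = D x)
    (happ : ∀ ε > (0:ℝ), ∃ F : H →L[ℂ] H,
      FiniteDimensional ℂ (LinearMap.range (F : H →ₗ[ℂ] H)) ∧ (P * F * P = F) ∧ ‖D - F‖ ≤ ε) :
    ∀ ε > (0:ℝ), ∃ Fe : (LinearMap.range (P : H →ₗ[ℂ] H)) →L[ℂ] (LinearMap.range (P : H →ₗ[ℂ] H)),
      FiniteDimensional ℂ (LinearMap.range
        (Fe : (LinearMap.range (P : H →ₗ[ℂ] H)) →ₗ[ℂ] (LinearMap.range (P : H →ₗ[ℂ] H)))) ∧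
      ‖Ke - Fe‖ ≤ ε := by
  intro ε hε
  obtain ⟨F, hFfd, hFP, hFc⟩ := happ ε hε
  have hsand : ∀ x : H, F x = P (F (P x)) := by
    intro x
    conv_lhs => rw [← hFP]
    rfl
  have hrangeF : LinearMap.range (F : H →ₗ[ℂ] H) ≤ LinearMap.range (P : H →ₗ[ℂ] H) := by
    rintro y ⟨x, rfl⟩
    exact ⟨F (P x), (hsand x).symm⟩
  have hmem : ∀ x : LinearMap.range (P : H →ₗ[ℂ] H), (F.comp (LinearMap.range (P : H →ₗ[ℂ] H)).subtypeL) x ∈ LinearMap.range (P : H →ₗ[ℂ] H) := fun x => hrangeF ⟨(x : H), rfl⟩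
  set Fe := (F.comp (LinearMap.range (P : H →ₗ[ℂ] H)).subtypeL).codRestrict (LinearMap.range (P : H →ₗ[ℂ] H)) hmem with hFe
  refine ⟨Fe, ?_, ?_⟩
  · haveI := hFfd
    haveI : FiniteDimensional ℂ (Submodule.comap (LinearMap.range (P : H →ₗ[ℂ] H)).subtype (LinearMap.range (F : H →ₗ[ℂ] H))) :=
      Module.Finite.equiv (Submodule.comapSubtypeEquivOfLe hrangeF).symm
    have hle : LinearMap.range (Fe : (LinearMap.range (P : H →ₗ[ℂ] H)) →ₗ[ℂ] (LinearMap.range (P : H →ₗ[ℂ] H))) ≤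
        Submodule.comap (LinearMap.range (P : H →ₗ[ℂ] H)).subtype (LinearMap.range (F : H →ₗ[ℂ] H)) := by
      rintro y ⟨x, rfl⟩
      exact ⟨(x : H), rfl⟩
    exact Submodule.finiteDimensional_of_le hle
  · apply ContinuousLinearMap.opNorm_le_bound _ hε.le
    intro x
    have hcoe : ((Ke - Fe) x : H) = (D - F) (x : H) := by
      simp only [ContinuousLinearMap.sub_apply, Submodule.coe_sub, hKe x]
      rfl
    have : ‖(Ke - Fe) x‖ = ‖((Ke - Fe) x : H)‖ := rfl
    rw [this, hcoe]
    calc ‖(D - F) (x : H)‖ ≤ ‖D - F‖ * ‖(x : H)‖ := (D - F).le_opNorm _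
      _ ≤ ε * ‖x‖ := by
          apply mul_le_mul_of_nonneg_right hFc (norm_nonneg _)

end Transfer

/-- A bounded operator is Fredholm if it has finite dimensional kernel,
closed range, and finite dimensional cokernel. -/
def IsFredholm {E : Type} [NormedAddCommGroup E] [NormedSpace ℂ E]
    (T : E →L[ℂ] E) : Prop :=
  FiniteDimensional ℂ (LinearMap.ker (T : E →ₗ[ℂ] E)) ∧ IsClosed (LinearMap.range (T : E →ₗ[ℂ] E) : Set E) ∧
    FiniteDimensional ℂ (E ⧸ LinearMap.range (T : E →ₗ[ℂ] E))

theorem proj_unitary_fredholm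
    {H : Type} [NormedAddCommGroup H] [InnerProductSpace ℂ H] [CompleteSpace H]
    [TopologicalSpace.SeparableSpace H]
    (P U : H →L[ℂ] H) (hP : P * P = P) (hPsa : adjoint P = P)
    (hU : U * adjoint U = 1) (hU' : adjoint U * U = 1)
    (hHS : IsHilbertSchmidt ((2 • P - 1) * U - U * (2 • P - 1))) :
    _root_.IsFredholm (((P * U).comp
        (Submodule.subtypeL (LinearMap.range (P : H →ₗ[ℂ] H)))).codRestrict
        (LinearMap.range (P : H →ₗ[ℂ] H))
        (fun x => by
          refine ⟨U x, ?_⟩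
          rfl)) := by
  classical
  set Q : H →L[ℂ] H := adjoint U with hQ
  have hUQ : U * Q = 1 := hU
  have hQU : Q * U = 1 := hU'
  have hPstar : star P = P := by rw [ContinuousLinearMap.star_eq_adjoint, hPsa]
  have hUstar : star U = Q := ContinuousLinearMap.star_eq_adjoint U
  set S : H →L[ℂ] H := 2 • P - 1 with hS
  have hS2 : S = P + P - 1 := by rw [hS, two_smul]
  set C : H →L[ℂ] H := S * U - U * S with hC
  have hSP : S * P = P := by
    rw [hS2]
    calc (P + P - 1) * P = P * P + P * P - P := by noncomm_ring
      _ = P := by rw [hP]; abel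
  have hPS : P * S = P := by
    rw [hS2]
    calc P * (P + P - 1) = P * P + P * P - P := by noncomm_ring
      _ = P := by rw [hP]; abel
  have hSstar : star S = S := by
    rw [hS2]
    simp [star_sub, star_add, star_one, hPstar]
  have hSS : S * S = 1 := by
    rw [hS2]
    calc (P + P - 1) * (P + P - 1)
        = (P*P + P*P + P*P + P*P) - (P + P) - (P + P) + 1 := by noncomm_ring
      _ = 1 := by rw [hP]; abel
  have hCstar : star C = Q * S - S * Q := by
    rw [hC]
    simp [star_sub, star_mul, hSstar, hUstar]
  have key0 : star C * C = 1 + 1 - Q * S * U * S - S * Q * S * U := by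
    calc star C * C
        = Q * (S * S) * U - Q * S * U * S - S * Q * S * U + S * (Q * U) * S := by
          rw [hCstar, hC]; noncomm_ring
      _ = 1 + 1 - Q * S * U * S - S * Q * S * U := by
          rw [hSS, hQU]
          simp only [mul_one, one_mul]
          rw [hQU, hSS]
          abel
  have hmid1 : P * (Q * S * U) * P = (2:ℂ) • (P*Q*P*U*P) - P := by
    calc P * (Q * S * U) * P = P * (Q * ((P + P) - 1) * U) * P := by rw [← hS2]
      _ = (P*Q*P*U*P + P*Q*P*U*P) - P * (Q * U) * P := by noncomm_ring
      _ = (P*Q*P*U*P + P*Q*P*U*P) - P := by rw [hQU, mul_one, hP]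
      _ = (2:ℂ) • (P*Q*P*U*P) - P := by module
  have key1 : P * star C * C * P = (4:ℂ) • (P - P*Q*P*U*P) := by
    calc P * star C * C * P = P * (star C * C) * P := by noncomm_ring
      _ = P * (1 + 1 - Q * S * U * S - S * Q * S * U) * P := by rw [key0]
      _ = (P*P + P*P) - (P * (Q * S * U)) * (S * P) - (P * S) * ((Q * S * U) * P) := by
          noncomm_ring
      _ = (P + P) - (P * (Q * S * U)) * P - P * ((Q * S * U) * P) := by rw [hP, hSP, hPS]
      _ = (P + P) - (P * (Q * S * U) * P) - (P * (Q * S * U) * P) := by noncomm_ring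
      _ = (P + P) - ((2:ℂ) • (P*Q*P*U*P) - P) - ((2:ℂ) • (P*Q*P*U*P) - P) := by rw [hmid1]
      _ = (4:ℂ) • (P - P*Q*P*U*P) := by module
  have hmid2 : P * (U * S * Q) * P = (2:ℂ) • (P*U*P*Q*P) - P := by
    calc P * (U * S * Q) * P = P * (U * ((P + P) - 1) * Q) * P := by rw [← hS2]
      _ = (P*U*P*Q*P + P*U*P*Q*P) - P * (U * Q) * P := by noncomm_ring
      _ = (P*U*P*Q*P + P*U*P*Q*P) - P := by rw [hUQ, mul_one, hP]
      _ = (2:ℂ) • (P*U*P*Q*P) - P := by module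
  have key2 : P * (U * star C) * C * (Q * P) = (4:ℂ) • (P - P*U*P*Q*P) := by
    calc P * (U * star C) * C * (Q * P) = P * U * (star C * C) * Q * P := by noncomm_ring
      _ = P * U * (1 + 1 - Q * S * U * S - S * Q * S * U) * Q * P := by rw [key0]
      _ = (P * (U * Q) * P + P * (U * Q) * P)
          - (P * (U * Q)) * (S * (U * (S * (Q * P))))
          - (P * U * S * Q * S) * ((U * Q) * P) := by noncomm_ring
      _ = (P * 1 * P + P * 1 * P)
          - (P * 1) * (S * (U * (S * (Q * P))))
          - (P * U * S * Q * S) * (1 * P) := by rw [hUQ]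
      _ = (P * P + P * P) - (P * S) * (U * S * (Q * P)) - (P * U * S * Q) * (S * P) := by
          noncomm_ring
      _ = (P + P) - P * (U * S * (Q * P)) - (P * U * S * Q) * P := by rw [hP, hPS, hSP]
      _ = (P * (U * S * Q) * P + P * (U * S * Q) * P) - ((P * (U * S * Q) * P
          + P * (U * S * Q) * P) - (P + P)) - (P * (U * S * Q) * P + P * (U * S * Q) * P)
          + (P * (U * S * Q) * P + P * (U * S * Q) * P) - (P * (U * S * Q) * P)
          - (P * (U * S * Q) * P) := by noncomm_ring
      _ = (4:ℂ) • (P - P*U*P*Q*P) := by rw [hmid2]; module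
  -- the subspace E = range P
  set E : Submodule ℂ H := LinearMap.range (P : H →ₗ[ℂ] H) with hE
  have hPx : ∀ x : ↥E, P (x : H) = (x : H) := by
    rintro ⟨z, y, rfl⟩
    exact DFunLike.congr_fun hP y
  have hEclosed : IsClosed (E : Set H) := by
    have hset : (E : Set H) = {x : H | P x = x} := by
      ext z
      constructor
      · rintro ⟨y, rfl⟩
        exact DFunLike.congr_fun hP y
      · intro hz
        exact ⟨z, hz⟩
    rw [hset]
    exact isClosed_eq P.continuous continuous_id
  haveI : CompleteSpace ↥E := hEclosed.completeSpace_coe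
  -- the operators on E
  set T' : ↥E →L[ℂ] ↥E := ((P * U).comp E.subtypeL).codRestrict E
      (fun x => ⟨U (x : H), rfl⟩) with hT'
  set S' : ↥E →L[ℂ] ↥E := ((P * Q).comp E.subtypeL).codRestrict E
      (fun x => ⟨Q (x : H), rfl⟩) with hS'
  set D₁ : H →L[ℂ] H := P - P*Q*P*U*P with hD₁
  set D₂ : H →L[ℂ] H := P - P*U*P*Q*P with hD₂
  have hmem₁ : ∀ x : ↥E, (D₁.comp E.subtypeL) x ∈ E := by
    intro x
    refine ⟨(x : H) - Q (P (U (P (x : H)))), ?_⟩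
    show P ((x : H) - Q (P (U (P (x : H))))) = _
    rw [map_sub]
    rfl
  have hmem₂ : ∀ x : ↥E, (D₂.comp E.subtypeL) x ∈ E := by
    intro x
    refine ⟨(x : H) - U (P (Q (P (x : H)))), ?_⟩
    show P ((x : H) - U (P (Q (P (x : H))))) = _
    rw [map_sub]
    rfl
  set K₁ : ↥E →L[ℂ] ↥E := (D₁.comp E.subtypeL).codRestrict E hmem₁ with hK₁
  set K₂ : ↥E →L[ℂ] ↥E := (D₂.comp E.subtypeL).codRestrict E hmem₂ with hK₂
  have hST : S' * T' = 1 - K₁ := by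
    ext x
    have hrhs : (((1 - K₁) x : ↥E) : H) = (x : H) - D₁ (x : H) := by
      rw [ContinuousLinearMap.sub_apply, Submodule.coe_sub, ContinuousLinearMap.one_apply]
      rfl
    have hlhs : (((S' * T') x : ↥E) : H) = P (Q (P (U (x : H)))) := rfl
    have hD1x : D₁ (x : H) = P (x : H) - P (Q (P (U (P (x : H))))) := rfl
    rw [hlhs, hrhs, hD1x, hPx x, sub_sub_cancel]
  have hTS : T' * S' = 1 - K₂ := by
    ext x
    have hrhs : (((1 - K₂) x : ↥E) : H) = (x : H) - D₂ (x : H) := by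
      rw [ContinuousLinearMap.sub_apply, Submodule.coe_sub, ContinuousLinearMap.one_apply]
      rfl
    have hlhs : (((T' * S') x : ↥E) : H) = P (U (P (Q (x : H)))) := rfl
    have hD2x : D₂ (x : H) = P (x : H) - P (U (P (Q (P (x : H))))) := rfl
    rw [hlhs, hrhs, hD2x, hPx x, sub_sub_cancel]
  -- approximation machinery
  have happC := hs_approx C hHS
  have t1 := transfer P hP ((4:ℂ)⁻¹ • star C) 1 C happC
  have t2 := transfer P hP ((4:ℂ)⁻¹ • (U * star C)) Q C happC
  have hD₁eq : P * ((4:ℂ)⁻¹ • star C) * C * ((1 : H →L[ℂ] H) * P) = D₁ := by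
    have h1 : P * ((4:ℂ)⁻¹ • star C) * C * ((1 : H →L[ℂ] H) * P)
        = (4:ℂ)⁻¹ • (P * star C * C * P) := by
      rw [one_mul, mul_smul_comm, smul_mul_assoc, smul_mul_assoc]
    rw [h1, key1, smul_smul, hD₁]
    norm_num
  have hD₂eq : P * ((4:ℂ)⁻¹ • (U * star C)) * C * (Q * P) = D₂ := by
    have h1 : P * ((4:ℂ)⁻¹ • (U * star C)) * C * (Q * P)
        = (4:ℂ)⁻¹ • (P * (U * star C) * C * (Q * P)) := by
      rw [mul_smul_comm, smul_mul_assoc, smul_mul_assoc]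
    rw [h1, key2, smul_smul, hD₂]
    norm_num
  have happ₁ : ∀ ε > (0:ℝ), ∃ F : H →L[ℂ] H,
      FiniteDimensional ℂ (LinearMap.range (F : H →ₗ[ℂ] H)) ∧ (P * F * P = F) ∧
      ‖D₁ - F‖ ≤ ε := by
    intro ε hε
    obtain ⟨F, h1, h2, h3⟩ := t1 ε hε
    exact ⟨F, h1, h2, by rwa [hD₁eq] at h3⟩
  have happ₂ : ∀ ε > (0:ℝ), ∃ F : H →L[ℂ] H,
      FiniteDimensional ℂ (LinearMap.range (F : H →ₗ[ℂ] H)) ∧ (P * F * P = F) ∧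
      ‖D₂ - F‖ ≤ ε := by
    intro ε hε
    obtain ⟨F, h1, h2, h3⟩ := t2 ε hε
    exact ⟨F, h1, h2, by rwa [hD₂eq] at h3⟩
  obtain ⟨F₁, hF₁fd, hF₁n⟩ := compress P hP D₁ K₁ (fun x => rfl) happ₁ (1/2) (by norm_num)
  obtain ⟨F₂, hF₂fd, hF₂n⟩ := compress P hP D₂ K₂ (fun x => rfl) happ₂ (1/2) (by norm_num)
  have hker := ker_fd T' S' K₁ F₁ hST hF₁fd (by linarith)
  have hrange := range_lemma T' S' K₂ F₂ hTS hF₂fd (by linarith)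
  exact ⟨hker, hrange.1, hrange.2⟩
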